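/- If a_N and b_N are sequences of nonnegative reals with a_N·N → a and b_N·N → b for constants a, b ≥ 0, and (K_N, L_N) is multinomially distributed counting N−1 independent trials with success probabilities a_N (for type +) and b_N (for type −), then P(K_N = L_N) converges to e^{−(a+b)}·Σ_{k≥0} a^k b^k/(k!)², i.e. the probability that two independent Poisson variables with means a and b are equal. -/

import Mathlib

open Filter

/-- P(K_N = L_N) where (K_N, L_N, N-1-K_N-L_N) ~ Multinomial(N-1; a, b, 1-a-b):
the probability that the two counts are equal. -/
noncomputable def probEqualCounts (N : ℕ) (a b : ℝ) : ℝ :=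
  ∑ k ∈ Finset.range ((N - 1) / 2 + 1),
    ((N - 1).choose k : ℝ) * ((N - 1 - k).choose k : ℝ) * a ^ k * b ^ k *
      (1 - a - b) ^ (N - 1 - 2 * k)

/-- A sequence with `c N * N → x` tends to zero. -/
lemma aux_tendsto_zero (c : ℕ → ℝ) (x : ℝ)
    (h : Tendsto (fun N : ℕ => c N * N) atTop (nhds x)) :
    Tendsto c atTop (nhds 0) := by
  have h2 : Tendsto (fun N : ℕ => (c N * N) * (1 / (N : ℝ))) atTop (nhds (x * 0)) :=
    h.mul tendsto_one_div_atTop_nhds_zero_nat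
  rw [mul_zero] at h2
  refine h2.congr' ?_
  filter_upwards [eventually_ge_atTop 1] with N hN
  have : (N : ℝ) ≠ 0 := by positivity
  field_simp

/-- Limit of `choose (N - j) k * c N ^ k`. -/
lemma aux_choose_lim (c : ℕ → ℝ) (x : ℝ)
    (h : Tendsto (fun N : ℕ => c N * N) atTop (nhds x)) (j k : ℕ) :
    Tendsto (fun N : ℕ => ((N - j).choose k : ℝ) * c N ^ k) atTop
      (nhds (x ^ k / (k.factorial : ℝ))) := by
  have hc0 : Tendsto c atTop (nhds 0) := aux_tendsto_zero c x h
  have hfac : Tendsto (fun N : ℕ => (∏ i ∈ Finset.range k, (((N - j - i : ℕ) : ℝ) * c N)))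
      atTop (nhds (∏ _i ∈ Finset.range k, x)) := by
    refine tendsto_finset_prod _ (fun i _ => ?_)
    have : Tendsto (fun N : ℕ => c N * N - ((j + i : ℕ) : ℝ) * c N) atTop
        (nhds (x - ((j + i : ℕ) : ℝ) * 0)) := h.sub (hc0.const_mul _)
    rw [mul_zero, sub_zero] at this
    refine this.congr' ?_
    filter_upwards [eventually_ge_atTop (j + i)] with N hN
    have hcast : ((N - j - i : ℕ) : ℝ) = (N : ℝ) - ((j + i : ℕ) : ℝ) := by
      rw [Nat.sub_sub]
      push_cast [Nat.cast_sub (by omega : j + i ≤ N)]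
      ring
    rw [hcast]; ring
  rw [Finset.prod_const, Finset.card_range] at hfac
  have heq : ∀ N : ℕ, (∏ i ∈ Finset.range k, (((N - j - i : ℕ) : ℝ) * c N))
      = ((N - j).choose k : ℝ) * c N ^ k * (k.factorial : ℝ) := by
    intro N
    rw [Finset.prod_mul_distrib, Finset.prod_const, Finset.card_range]
    have : (∏ i ∈ Finset.range k, ((N - j - i : ℕ) : ℝ))
        = (((N - j).descFactorial k : ℕ) : ℝ) := by
      rw [Nat.descFactorial_eq_prod_range]
      push_cast
      rfl
    rw [this, Nat.descFactorial_eq_factorial_mul_choose]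
    push_cast
    ring
  have hfac' : Tendsto (fun N : ℕ => ((N - j).choose k : ℝ) * c N ^ k * (k.factorial : ℝ))
      atTop (nhds (x ^ k)) := by
    refine hfac.congr (fun N => ?_)
    rw [heq]
  have := hfac'.div_const (k.factorial : ℝ)
  refine this.congr (fun N => ?_)
  have hk : (k.factorial : ℝ) ≠ 0 := by positivity
  field_simp

/-- Limit `(1 - c N) ^ (N - d) → exp (-t)` when `c N * N → t`. -/
lemma aux_pow_exp (c : ℕ → ℝ) (t : ℝ) (hc0 : ∀ N, 0 ≤ c N)
    (h : Tendsto (fun N : ℕ => c N * N) atTop (nhds t)) (d : ℕ) :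
    Tendsto (fun N : ℕ => (1 - c N) ^ (N - d)) atTop (nhds (Real.exp (-t))) := by
  have hcz : Tendsto c atTop (nhds 0) := aux_tendsto_zero c t h
  have hev : ∀ᶠ N in atTop, c N < 1 / 2 := hcz.eventually_lt_const (by norm_num)
  -- m N * c N → t
  have hA : Tendsto (fun N : ℕ => ((N - d : ℕ) : ℝ) * c N) atTop (nhds t) := by
    have : Tendsto (fun N : ℕ => c N * N - (d : ℝ) * c N) atTop (nhds (t - (d : ℝ) * 0)) :=
      h.sub (hcz.const_mul _)
    rw [mul_zero, sub_zero] at this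
    refine this.congr' ?_
    filter_upwards [eventually_ge_atTop d] with N hN
    rw [Nat.cast_sub hN]; ring
  -- m N * (log (1 - c N) + c N) → 0
  have hE : Tendsto (fun N : ℕ => ((N - d : ℕ) : ℝ) * (Real.log (1 - c N) + c N)) atTop
      (nhds 0) := by
    have hbndlim : Tendsto (fun N : ℕ => 2 * (c N * N) * c N) atTop (nhds (2 * t * 0)) :=
      (h.const_mul 2).mul hcz
    rw [mul_zero] at hbndlim
    refine squeeze_zero_norm' ?_ hbndlim
    filter_upwards [hev] with N hN
    have hc : |c N| < 1 := by rw [abs_of_nonneg (hc0 N)]; linarith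
    have hlog := Real.abs_log_sub_add_sum_range_le hc 1
    simp only [Finset.sum_range_one, pow_one] at hlog
    have habs : |Real.log (1 - c N) + c N| ≤ 2 * c N ^ 2 := by
      rw [abs_of_nonneg (hc0 N)] at hlog
      have hlog2 : |c N + Real.log (1 - c N)| ≤ c N ^ 2 / (1 - c N) := by
        norm_num at hlog ⊢
        convert hlog using 2 <;> norm_num
      rw [add_comm]
      refine hlog2.trans ?_
      rw [div_le_iff₀ (by linarith)]
      nlinarith [mul_nonneg (sq_nonneg (c N)) (by linarith : (0:ℝ) ≤ 1 - 2 * c N)]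
    calc ‖((N - d : ℕ) : ℝ) * (Real.log (1 - c N) + c N)‖
        = ((N - d : ℕ) : ℝ) * |Real.log (1 - c N) + c N| := by
          rw [norm_mul, Real.norm_natCast, Real.norm_eq_abs]
      _ ≤ (N : ℝ) * (2 * c N ^ 2) := by
          apply mul_le_mul _ habs (abs_nonneg _) (Nat.cast_nonneg _)
          exact_mod_cast Nat.cast_le.mpr (Nat.sub_le N d)
      _ = 2 * (c N * N) * c N := by ring
  have hL : Tendsto (fun N : ℕ => ((N - d : ℕ) : ℝ) * Real.log (1 - c N)) atTop
      (nhds (-t)) := by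
    have := hE.sub hA
    rw [zero_sub] at this
    refine this.congr (fun N => ?_)
    ring
  have := (Real.continuous_exp.tendsto _).comp hL
  refine this.congr' ?_
  filter_upwards [hev] with N hN
  have hpos : 0 < 1 - c N := by linarith
  simp only [Function.comp]
  rw [Real.exp_nat_mul, Real.exp_log hpos]

/-- Cast bound on binomial coefficients. -/
lemma aux_choose_le (n k m : ℕ) (h : n ≤ m) :
    ((n.choose k : ℕ) : ℝ) ≤ (m : ℝ) ^ k / (k.factorial : ℝ) := by
  rw [le_div_iff₀ (by positivity : (0:ℝ) < (k.factorial : ℝ))]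
  have h1 : n.choose k * k.factorial ≤ m ^ k := by
    calc n.choose k * k.factorial = k.factorial * n.choose k := by ring
      _ = n.descFactorial k := (Nat.descFactorial_eq_factorial_mul_choose n k).symm
      _ ≤ n ^ k := Nat.descFactorial_le_pow n k
      _ ≤ m ^ k := Nat.pow_le_pow_left h k
  exact_mod_cast h1

theorem stmt_11 (a b : ℝ) (ha : 0 ≤ a) (hb : 0 ≤ b) (aN bN : ℕ → ℝ)
    (haN : ∀ N, 0 ≤ aN N) (hbN : ∀ N, 0 ≤ bN N) (hab : ∀ N, aN N + bN N ≤ 1)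
    (hla : Tendsto (fun N : ℕ => aN N * N) atTop (nhds a))
    (hlb : Tendsto (fun N : ℕ => bN N * N) atTop (nhds b)) :
    Tendsto (fun N : ℕ => probEqualCounts N (aN N) (bN N)) atTop
      (nhds (Real.exp (-(a + b)) * ∑' k : ℕ, a ^ k * b ^ k / (k.factorial : ℝ) ^ 2)) := by
  -- the term of the sum, extended to all k
  set f : ℕ → ℕ → ℝ := fun N k =>
    ((N - 1).choose k : ℝ) * ((N - 1 - k).choose k : ℝ) * aN N ^ k * bN N ^ k *
      (1 - aN N - bN N) ^ (N - 1 - 2 * k) with hf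
  -- probEqualCounts equals the tsum of f
  have htsum : ∀ N : ℕ, probEqualCounts N (aN N) (bN N) = ∑' k, f N k := by
    intro N
    rw [probEqualCounts]
    refine (tsum_eq_sum ?_).symm
    intro k hk
    simp only [Finset.mem_range, not_lt] at hk
    have hz : (N - 1 - k).choose k = 0 := Nat.choose_eq_zero_of_lt (by omega)
    simp [hf, hz]
  -- bounds
  obtain ⟨Ma, hMa⟩ := hla.bddAbove_range
  obtain ⟨Mb, hMb⟩ := hlb.bddAbove_range
  have hMa' : ∀ N : ℕ, aN N * N ≤ Ma := fun N => hMa (Set.mem_range_self N)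
  have hMb' : ∀ N : ℕ, bN N * N ≤ Mb := fun N => hMb (Set.mem_range_self N)
  have hMa0 : 0 ≤ Ma := le_trans (by simp) (hMa' 0)
  have hMb0 : 0 ≤ Mb := le_trans (by simp) (hMb' 0)
  set bound : ℕ → ℝ := fun k => Ma ^ k / (k.factorial : ℝ) * (Mb ^ k / (k.factorial : ℝ))
    with hbound
  have hbound_nonneg : ∀ k, 0 ≤ bound k := fun k => by positivity
  have h_sum : Summable bound := by
    refine Summable.of_nonneg_of_le hbound_nonneg (fun k => ?_)
      (Real.summable_pow_div_factorial (Ma * Mb))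
    have h1 : (1 : ℝ) ≤ (k.factorial : ℝ) := by exact_mod_cast k.factorial_pos
    have hfk : (0:ℝ) < (k.factorial : ℝ) := by positivity
    show Ma ^ k / (k.factorial : ℝ) * (Mb ^ k / (k.factorial : ℝ))
      ≤ (Ma * Mb) ^ k / (k.factorial : ℝ)
    rw [div_mul_div_comm, mul_pow, div_le_div_iff₀ (by positivity) hfk]
    have : (0:ℝ) ≤ Ma ^ k * Mb ^ k := by positivity
    nlinarith [mul_nonneg (mul_nonneg this hfk.le) (by linarith : (0:ℝ) ≤ (k.factorial : ℝ) - 1)]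
  -- pointwise limits
  have h_lim : ∀ k : ℕ, Tendsto (fun N => f N k) atTop
      (nhds (Real.exp (-(a + b)) * (a ^ k * b ^ k / (k.factorial : ℝ) ^ 2))) := by
    intro k
    have h1 := aux_choose_lim aN a hla 1 k
    have h2 := aux_choose_lim bN b hlb (1 + k) k
    have hcsum : Tendsto (fun N : ℕ => (aN N + bN N) * N) atTop (nhds (a + b)) := by
      have := hla.add hlb
      refine this.congr (fun N => ?_); ring
    have h3 := aux_pow_exp (fun N => aN N + bN N) (a + b)
      (fun N => add_nonneg (haN N) (hbN N)) hcsum (1 + 2 * k)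
    have := (h1.mul h2).mul h3
    have heq : (fun N : ℕ => ((N - 1).choose k : ℝ) * aN N ^ k *
        (((N - (1 + k)).choose k : ℝ) * bN N ^ k) *
        (1 - (aN N + bN N)) ^ (N - (1 + 2 * k))) = fun N => f N k := by
      funext N
      simp only [hf]
      have e1 : N - 1 - k = N - (1 + k) := by omega
      have e2 : N - 1 - 2 * k = N - (1 + 2 * k) := by omega
      rw [e1, e2]
      ring_nf
    rw [← heq]
    have hval : Real.exp (-(a + b)) * (a ^ k * b ^ k / (k.factorial : ℝ) ^ 2)
        = a ^ k / (k.factorial : ℝ) * (b ^ k / (k.factorial : ℝ)) * Real.exp (-(a + b)) := by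
      field_simp
    rw [hval]
    exact this
  -- uniform bound
  have h_bound : ∀ N, ∀ k, ‖f N k‖ ≤ bound k := by
    intro N k
    have hp0 : (0:ℝ) ≤ 1 - aN N - bN N := by have := hab N; linarith
    have hp1 : (1 - aN N - bN N) ^ (N - 1 - 2 * k) ≤ 1 := by
      apply pow_le_one₀ hp0
      have := haN N; have := hbN N; linarith
    have hfnn : 0 ≤ f N k := by
      simp only [hf]
      exact mul_nonneg (mul_nonneg (mul_nonneg (mul_nonneg (Nat.cast_nonneg _)
        (Nat.cast_nonneg _)) (pow_nonneg (haN N) k)) (pow_nonneg (hbN N) k))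
        (pow_nonneg hp0 _)
    rw [Real.norm_eq_abs, abs_of_nonneg hfnn, hf]
    have hCa : ((N - 1).choose k : ℝ) * aN N ^ k ≤ Ma ^ k / (k.factorial : ℝ) := by
      calc ((N - 1).choose k : ℝ) * aN N ^ k
          ≤ ((N : ℝ) ^ k / (k.factorial : ℝ)) * aN N ^ k := by
            exact mul_le_mul_of_nonneg_right (aux_choose_le (N - 1) k N (Nat.sub_le N 1))
              (pow_nonneg (haN N) k)
        _ = (aN N * N) ^ k / (k.factorial : ℝ) := by rw [mul_pow]; ring
        _ ≤ Ma ^ k / (k.factorial : ℝ) := by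
            gcongr
            · exact mul_nonneg (haN N) (Nat.cast_nonneg N)
            · exact hMa' N
    have hCb : ((N - 1 - k).choose k : ℝ) * bN N ^ k ≤ Mb ^ k / (k.factorial : ℝ) := by
      calc ((N - 1 - k).choose k : ℝ) * bN N ^ k
          ≤ ((N : ℝ) ^ k / (k.factorial : ℝ)) * bN N ^ k := by
            exact mul_le_mul_of_nonneg_right (aux_choose_le (N - 1 - k) k N (by omega))
              (pow_nonneg (hbN N) k)
        _ = (bN N * N) ^ k / (k.factorial : ℝ) := by rw [mul_pow]; ring
        _ ≤ Mb ^ k / (k.factorial : ℝ) := by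
            gcongr
            · exact mul_nonneg (hbN N) (Nat.cast_nonneg N)
            · exact hMb' N
    calc ((N - 1).choose k : ℝ) * ((N - 1 - k).choose k : ℝ) * aN N ^ k * bN N ^ k *
          (1 - aN N - bN N) ^ (N - 1 - 2 * k)
        ≤ ((N - 1).choose k : ℝ) * ((N - 1 - k).choose k : ℝ) * aN N ^ k * bN N ^ k := by
          nlinarith [mul_nonneg (mul_nonneg (mul_nonneg
            (Nat.cast_nonneg ((N-1).choose k)) (Nat.cast_nonneg ((N-1-k).choose k)))
            (pow_nonneg (haN N) k)) (pow_nonneg (hbN N) k)]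
      _ = (((N - 1).choose k : ℝ) * aN N ^ k) * (((N - 1 - k).choose k : ℝ) * bN N ^ k) := by
          ring
      _ ≤ (Ma ^ k / (k.factorial : ℝ)) * (Mb ^ k / (k.factorial : ℝ)) := by
          apply mul_le_mul hCa hCb
          · exact mul_nonneg (Nat.cast_nonneg _) (pow_nonneg (hbN N) k)
          · positivity
      _ = bound k := rfl
  -- conclude
  rw [← tsum_mul_left]
  have := tendsto_tsum_of_dominated_convergence h_sum h_lim (Eventually.of_forall h_bound)
  refine this.congr (fun N => (htsum N).symm)
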